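/- (Shapiro convolution) For all natural numbers n, ∑_{j=0}^{n} C_{2j} * C_{2n-2j} = 4^n * C_n, where C_m denotes the m-th Catalan number. -/

import Mathlib

open Finset

private lemma cat_ratio (m : ℕ) :
    ((m : ℚ) + 2) * catalan (m + 1) = 2 * (2 * m + 1) * catalan m := by
  have h1 : ((m + 1 : ℕ) + 1) * catalan (m + 1) = (m + 1).centralBinom :=
    succ_mul_catalan_eq_centralBinom (m + 1)
  have h2 : (m + 1) * catalan m = m.centralBinom := succ_mul_catalan_eq_centralBinom m
  have h3 := Nat.succ_mul_centralBinom_succ m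
  have key : (m + 1) * ((m + 1 + 1) * catalan (m + 1))
      = (m + 1) * (2 * (2 * m + 1) * catalan m) := by
    rw [h1, ← mul_assoc, h3, ← h2]; ring
  have hc := congrArg (fun x : ℕ => (x : ℚ)) key
  push_cast at hc
  have hm : ((m : ℚ) + 1) ≠ 0 := by positivity
  have := mul_left_cancel₀ hm hc
  linarith [this]

private lemma cat2 (m : ℕ) :
    ((m : ℚ) + 2) * ((m : ℚ) + 3) * catalan (m + 2) = 4 * (2 * m + 1) * (2 * m + 3) * catalan m := by
  have h1 := cat_ratio m
  have h2 := cat_ratio (m + 1)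
  push_cast at h2
  linear_combination ((m : ℚ) + 2) * h2 + 2 * (2 * (m : ℚ) + 3) * h1

private lemma shapiro_key (n : ℕ) : ∀ k, k ≤ n →
    ((n : ℚ) + 2) * ∑ j ∈ range k, ((catalan (2 * j) : ℚ) * catalan (2 * (n + 1) - 2 * j))
      - 8 * (2 * (n : ℚ) + 1) * ∑ j ∈ range k, ((catalan (2 * j) : ℚ) * catalan (2 * n - 2 * j))
    = (-2) * (k : ℚ) * (2 * (k : ℚ) + 1) * (3 * (n : ℚ) - 2 * k + 4) * (4 * (n : ℚ) - 4 * k + 1)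
        * (4 * (n : ℚ) - 4 * k + 3)
        / (((n : ℚ) + 1) * ((n : ℚ) - k + 1) * (2 * (n : ℚ) + 3) * (2 * (n : ℚ) - 2 * k + 3))
        * catalan (2 * k) * catalan (2 * n - 2 * k) := by
  intro k
  induction k with
  | zero => intro _; simp
  | succ k ih =>
    intro hk
    have ih' := ih (by omega)
    obtain ⟨d, hd⟩ : ∃ d, n = k + 1 + d := ⟨n - k - 1, by omega⟩
    subst hd
    rw [sum_range_succ, sum_range_succ]
    have i1 : 2 * (k + 1 + d + 1) - 2 * k = 2 * d + 4 := by omega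
    have i2 : 2 * (k + 1 + d) - 2 * k = 2 * d + 2 := by omega
    have i3 : 2 * (k + 1) = 2 * k + 2 := by omega
    have i4 : 2 * (k + 1 + d) - (2 * k + 2) = 2 * d := by omega
    rw [i1, i2, i3, i4]
    rw [i2] at ih'
    have hkq : (0:ℚ) ≤ (k:ℚ) := by positivity
    have hdq : (0:ℚ) ≤ (d:ℚ) := by positivity
    have e1 : ((catalan (2 * k + 2) : ℚ))
        = 4 * (4 * (k:ℚ) + 1) * (4 * (k:ℚ) + 3) * catalan (2 * k)
          / ((2 * (k:ℚ) + 2) * (2 * (k:ℚ) + 3)) := by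
      rw [eq_div_iff (by positivity)]
      have := cat2 (2 * k); push_cast at this; linarith
    have e2 : ((catalan (2 * d + 2) : ℚ))
        = 4 * (4 * (d:ℚ) + 1) * (4 * (d:ℚ) + 3) * catalan (2 * d)
          / ((2 * (d:ℚ) + 2) * (2 * (d:ℚ) + 3)) := by
      rw [eq_div_iff (by positivity)]
      have := cat2 (2 * d); push_cast at this; linarith
    have e3 : ((catalan (2 * d + 4) : ℚ))
        = 4 * (4 * (d:ℚ) + 5) * (4 * (d:ℚ) + 7) * catalan (2 * d + 2)
          / ((2 * (d:ℚ) + 4) * (2 * (d:ℚ) + 5)) := by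
      rw [eq_div_iff (by positivity)]
      have := cat2 (2 * d + 2); push_cast at this; linarith
    have claim :
        (((k + 1 + d : ℕ) : ℚ) + 2) * ((catalan (2 * k) : ℚ) * catalan (2 * d + 4))
          - 8 * (2 * ((k + 1 + d : ℕ) : ℚ) + 1) * ((catalan (2 * k) : ℚ) * catalan (2 * d + 2))
        = (-2) * ((k + 1 : ℕ) : ℚ) * (2 * ((k + 1 : ℕ) : ℚ) + 1)
            * (3 * ((k + 1 + d : ℕ) : ℚ) - 2 * ((k + 1 : ℕ) : ℚ) + 4)
            * (4 * ((k + 1 + d : ℕ) : ℚ) - 4 * ((k + 1 : ℕ) : ℚ) + 1)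
            * (4 * ((k + 1 + d : ℕ) : ℚ) - 4 * ((k + 1 : ℕ) : ℚ) + 3)
            / ((((k + 1 + d : ℕ) : ℚ) + 1) * (((k + 1 + d : ℕ) : ℚ) - ((k + 1 : ℕ) : ℚ) + 1)
              * (2 * ((k + 1 + d : ℕ) : ℚ) + 3)
              * (2 * ((k + 1 + d : ℕ) : ℚ) - 2 * ((k + 1 : ℕ) : ℚ) + 3))
            * catalan (2 * k + 2) * catalan (2 * d)
          - (-2) * (k : ℚ) * (2 * (k : ℚ) + 1) * (3 * ((k + 1 + d : ℕ) : ℚ) - 2 * (k : ℚ) + 4)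
            * (4 * ((k + 1 + d : ℕ) : ℚ) - 4 * (k : ℚ) + 1)
            * (4 * ((k + 1 + d : ℕ) : ℚ) - 4 * (k : ℚ) + 3)
            / ((((k + 1 + d : ℕ) : ℚ) + 1) * (((k + 1 + d : ℕ) : ℚ) - (k : ℚ) + 1)
              * (2 * ((k + 1 + d : ℕ) : ℚ) + 3)
              * (2 * ((k + 1 + d : ℕ) : ℚ) - 2 * (k : ℚ) + 3))
            * catalan (2 * k) * catalan (2 * d + 2) := by
      rw [e3, e2, e1]
      push_cast
      have n1 : ((k:ℚ) + 1 + d + 1) ≠ 0 := by positivity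
      have n2 : ((k:ℚ) + 1 + d - (k + 1) + 1) ≠ 0 := by
        have : ((k:ℚ) + 1 + d - (k + 1) + 1) = (d:ℚ) + 1 := by ring
        rw [this]; positivity
      have n3 : (2 * ((k:ℚ) + 1 + d) + 3) ≠ 0 := by positivity
      have n4 : (2 * ((k:ℚ) + 1 + d) - 2 * (k + 1) + 3) ≠ 0 := by
        have : (2 * ((k:ℚ) + 1 + d) - 2 * (k + 1) + 3) = 2 * (d:ℚ) + 3 := by ring
        rw [this]; positivity
      have n5 : ((k:ℚ) + 1 + d - k + 1) ≠ 0 := by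
        have : ((k:ℚ) + 1 + d - k + 1) = (d:ℚ) + 2 := by ring
        rw [this]; positivity
      have n6 : (2 * ((k:ℚ) + 1 + d) - 2 * k + 3) ≠ 0 := by
        have : (2 * ((k:ℚ) + 1 + d) - 2 * k + 3) = 2 * (d:ℚ) + 5 := by ring
        rw [this]; positivity
      rw [show ((k:ℚ) + 1 + d - (k + 1) + 1) = (d:ℚ) + 1 by ring,
        show (2 * ((k:ℚ) + 1 + d) - 2 * (k + 1) + 3) = 2 * (d:ℚ) + 3 by ring,
        show ((k:ℚ) + 1 + d - k + 1) = (d:ℚ) + 2 by ring,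
        show (2 * ((k:ℚ) + 1 + d) - 2 * k + 3) = 2 * (d:ℚ) + 5 by ring]
      field_simp
      ring
    linear_combination ih' + claim

private lemma shapiro_rec (n : ℕ) :
    ((n : ℚ) + 2) * ∑ j ∈ range (n + 2), ((catalan (2 * j) : ℚ) * catalan (2 * (n + 1) - 2 * j))
    = 8 * (2 * (n : ℚ) + 1) * ∑ j ∈ range (n + 1), ((catalan (2 * j) : ℚ) * catalan (2 * n - 2 * j)) := by
  have hkey := shapiro_key n n le_rfl
  rw [sum_range_succ, sum_range_succ
    (fun j => ((catalan (2 * j) : ℚ) * catalan (2 * (n + 1) - 2 * j))), sum_range_succ]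
  have i1 : 2 * (n + 1) - 2 * (n + 1) = 0 := by omega
  have i2 : 2 * (n + 1) - 2 * n = 2 := by omega
  have i3 : 2 * n - 2 * n = 0 := by omega
  rw [i1, i2, i3]
  rw [i3] at hkey
  have e4 : ((catalan (2 * (n + 1)) : ℚ))
      = 4 * (4 * (n:ℚ) + 1) * (4 * (n:ℚ) + 3) * catalan (2 * n)
        / ((2 * (n:ℚ) + 2) * (2 * (n:ℚ) + 3)) := by
    rw [eq_div_iff (by positivity), show 2 * (n + 1) = 2 * n + 2 from by omega]
    have := cat2 (2 * n); push_cast at this; linarith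
  have claim : ((n : ℚ) + 2) * ((catalan (2 * n) : ℚ) * catalan 2
        + (catalan (2 * (n + 1)) : ℚ) * catalan 0)
      - 8 * (2 * (n : ℚ) + 1) * ((catalan (2 * n) : ℚ) * catalan 0)
      = -((-2) * (n : ℚ) * (2 * (n : ℚ) + 1) * (3 * (n : ℚ) - 2 * n + 4) * (4 * (n : ℚ) - 4 * n + 1)
          * (4 * (n : ℚ) - 4 * n + 3)
          / (((n : ℚ) + 1) * ((n : ℚ) - n + 1) * (2 * (n : ℚ) + 3) * (2 * (n : ℚ) - 2 * n + 3))
          * catalan (2 * n) * catalan 0) := by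
    rw [e4, catalan_two, catalan_zero]
    have n1 : ((n:ℚ) + 1) ≠ 0 := by positivity
    have n2 : ((n:ℚ) - n + 1) ≠ 0 := by
      rw [show ((n:ℚ) - n + 1) = 1 from by ring]; norm_num
    have n3 : (2 * (n:ℚ) + 3) ≠ 0 := by positivity
    have n4 : (2 * (n:ℚ) - 2 * n + 3) ≠ 0 := by
      rw [show (2 * (n:ℚ) - 2 * n + 3) = 3 from by ring]; norm_num
    push_cast
    field_simp
    ring
  linear_combination hkey + claim

private lemma shapiro_q : ∀ n : ℕ,
    (∑ j ∈ range (n + 1), ((catalan (2 * j) : ℚ) * catalan (2 * n - 2 * j)))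
      = 4 ^ n * catalan n := by
  intro n
  induction n with
  | zero => simp
  | succ n ih =>
    have hrec := shapiro_rec n
    rw [ih] at hrec
    have h2 : ((n : ℚ) + 2) ≠ 0 := by positivity
    have goal2 : ((n : ℚ) + 2) * (∑ j ∈ range (n + 1 + 1),
        ((catalan (2 * j) : ℚ) * catalan (2 * (n + 1) - 2 * j)))
        = ((n : ℚ) + 2) * (4 ^ (n + 1) * catalan (n + 1)) := by
      rw [hrec]
      linear_combination (-(4 : ℚ) ^ (n + 1)) * cat_ratio n
    exact mul_left_cancel₀ h2 goal2

theorem shapiro_convolution (n : ℕ) :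
    ∑ j ∈ Finset.range (n + 1), catalan (2 * j) * catalan (2 * n - 2 * j) =
      4 ^ n * catalan n := by
  have h := shapiro_q n
  exact_mod_cast h
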